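/- The exact boundary formula for f''(x₀) follows from linear algebra: the coefficients c₀ = −23/(2h²), c₁ = 16/(2h²), c₂ = 7/(2h²) for function values and d₀ = −6/h, d₁ = −8/h, d₂ = −1/h for derivative values satisfy, for every polynomial p of degree ≤ 4, the identity p''(x₀) = c₀ p(x₀) + c₁ p(x₀+h) + c₂ p(x₀+2h) + d₀ p'(x₀) + d₁ p'(x₀+h) + d₂ p'(x₀+2h). -/
import Mathlib


theorem boundary_formula_exact_on_quartics (h x₀ : ℝ) (hh : 0 < h)
    (p : Polynomial ℝ) (hp : p.degree ≤ 4) :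
    (p.derivative.derivative).eval x₀ =
      (-23 / (2 * h ^ 2)) * p.eval x₀ + (16 / (2 * h ^ 2)) * p.eval (x₀ + h)
        + (7 / (2 * h ^ 2)) * p.eval (x₀ + 2 * h)
        + (-6 / h) * p.derivative.eval x₀ + (-8 / h) * p.derivative.eval (x₀ + h)
        + (-1 / h) * p.derivative.eval (x₀ + 2 * h) := by
  have hd : p.natDegree < 5 := by
    have h4 : p.natDegree ≤ 4 := Polynomial.natDegree_le_iff_degree_le.mpr (by exact_mod_cast hp)
    omega
  have hd1 : p.derivative.natDegree < 5 :=
    lt_of_le_of_lt (p.natDegree_derivative_le) (by omega)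
  have hd2 : p.derivative.derivative.natDegree < 5 :=
    lt_of_le_of_lt (p.derivative.natDegree_derivative_le) (by omega)
  rw [Polynomial.eval_eq_sum_range' hd2, Polynomial.eval_eq_sum_range' hd]
  rw [Polynomial.eval_eq_sum_range' hd (x₀ + h), Polynomial.eval_eq_sum_range' hd (x₀ + 2*h)]
  rw [Polynomial.eval_eq_sum_range' hd1 x₀, Polynomial.eval_eq_sum_range' hd1 (x₀ + h),
    Polynomial.eval_eq_sum_range' hd1 (x₀ + 2*h)]
  simp only [Finset.sum_range_succ, Finset.sum_range_zero, Polynomial.coeff_derivative]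
  have c5 : p.coeff 5 = 0 := Polynomial.coeff_eq_zero_of_natDegree_lt hd
  have c6 : p.coeff 6 = 0 := Polynomial.coeff_eq_zero_of_natDegree_lt (by omega)
  rw [c5, c6]
  push_cast
  field_simp
  ring
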